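/- arXiv:2504.02944 — 2 statements merged into one kernel-verified Lean document; each statement's English description precedes it below -/
import Mathlib

section
/- Let d ≥ 1, let B be a finite set, and let M : B → Matrix (Fin d) (Fin d) ℂ be a POVM (each M_b positive semidefinite, ∑_b M_b = 1) such that every effect is rank one, i.e. for every b there is a nonzero vector v_b ∈ ℂ^d with M_b = v_b v_bᴴ. Suppose M is nonclassical. Then for every ω ∈ [0,1), there do NOT exist POVMs N : B → Matrix (Fin d) (Fin d) ℂ and K : B → Matrix (Fin d) (Fin d) ℂ such that (i) M_b = ω • N_b + (1−ω) • K_b for all b, (ii) for every β : B → ℝ with ∑_b β(b) • M_b = 0 one has ∑_b β(b) • N_b = 0 and ∑_b β(b) • K_b = 0, and (iii) K is classical. (In other words, the nonclassical fraction of any nonclassical measurement with rank-one effects equals 1.) -/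
open Matrix BigOperators
open scoped ComplexOrder

noncomputable section

lemma rsmul_eq_csmul {d : ℕ} (r : ℝ) (A : Matrix (Fin d) (Fin d) ℂ) :
    r • A = (r : ℂ) • A := by
  ext i j
  simp [Matrix.smul_apply, Complex.real_smul]

lemma psd_rsmul {d : ℕ} {A : Matrix (Fin d) (Fin d) ℂ} (hA : A.PosSemidef)
    {r : ℝ} (hr : 0 ≤ r) : (r • A).PosSemidef := by
  rw [rsmul_eq_csmul]
  refine .of_dotProduct_mulVec_nonneg ?_ ?_
  · show ((r:ℂ) • A)ᴴ = (r:ℂ) • A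
    rw [conjTranspose_smul, hA.1.eq, Complex.star_def, Complex.conj_ofReal]
  · intro x
    rw [smul_mulVec, dotProduct_smul, smul_eq_mul]
    exact mul_nonneg (Complex.zero_le_real.mpr hr) (hA.dotProduct_mulVec_nonneg x)

/-- Any PSD matrix dominated by a rank-one matrix is a nonnegative multiple of it. -/
lemma psd_le_rank_one {d : ℕ} {v : Fin d → ℂ} (hv : v ≠ 0)
    {A : Matrix (Fin d) (Fin d) ℂ} (hA : A.PosSemidef)
    (hdom : (Matrix.of (fun i j => v i * star (v j)) - A).PosSemidef) :
    ∃ c : ℝ, 0 ≤ c ∧ A = c • Matrix.of (fun i j => v i * star (v j)) := by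
  set V : Matrix (Fin d) (Fin d) ℂ := Matrix.of (fun i j => v i * star (v j)) with hV
  have hVmul : ∀ x : Fin d → ℂ, V *ᵥ x = (star v ⬝ᵥ x) • v := by
    intro x
    funext i
    simp only [Matrix.mulVec, dotProduct, hV, Matrix.of_apply, Pi.smul_apply,
      smul_eq_mul, Pi.star_apply]
    rw [Finset.sum_mul]
    exact Finset.sum_congr rfl fun j _ => by ring
  -- orthogonal vectors are killed by A
  have hker : ∀ w : Fin d → ℂ, star v ⬝ᵥ w = 0 → A *ᵥ w = 0 := by
    intro w hw
    have h1 : 0 ≤ star w ⬝ᵥ (V - A) *ᵥ w := hdom.dotProduct_mulVec_nonneg w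
    have h2 : 0 ≤ star w ⬝ᵥ A *ᵥ w := hA.dotProduct_mulVec_nonneg w
    have h3 : star w ⬝ᵥ V *ᵥ w = 0 := by
      rw [hVmul, hw, zero_smul, dotProduct_zero]
    rw [sub_mulVec, dotProduct_sub, h3, zero_sub] at h1
    have : star w ⬝ᵥ A *ᵥ w = 0 := le_antisymm (neg_nonneg.mp h1) h2
    exact (hA.dotProduct_mulVec_zero_iff w).mp this
  have hn : star v ⬝ᵥ v ≠ 0 := fun h => hv (dotProduct_star_self_eq_zero.mp h)
  set n : ℂ := star v ⬝ᵥ v with hndef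
  set c0 : ℂ := star v ⬝ᵥ A *ᵥ v with hc0def
  -- A v = (c0 / n) • v
  have hAv : A *ᵥ v = (c0 / n) • v := by
    set w : Fin d → ℂ := A *ᵥ v - (c0 / n) • v with hwdef
    have hvw : star v ⬝ᵥ w = 0 := by
      rw [hwdef, dotProduct_sub, dotProduct_smul, smul_eq_mul, ← hndef, ← hc0def,
        div_mul_cancel₀ _ hn, sub_self]
    have hAw : A *ᵥ w = 0 := hker w hvw
    have hwA : star w ᵥ* A = 0 := by
      have h := star_mulVec A w
      rw [hAw, star_zero, hA.1.eq] at h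
      exact h.symm
    have hwAv : star w ⬝ᵥ A *ᵥ v = 0 := by
      rw [dotProduct_mulVec, hwA, zero_dotProduct]
    have hwv : star w ⬝ᵥ v = 0 := by
      have := congrArg star hvw
      rwa [star_dotProduct, star_star, star_zero] at this
    have hww : star w ⬝ᵥ w = 0 := by
      rw [hwdef]
      rw [dotProduct_sub, hwAv, dotProduct_smul, hwv, smul_zero, sub_self]
    have : w = 0 := dotProduct_star_self_eq_zero.mp hww
    rw [hwdef] at this
    linear_combination (norm := module) this
  -- now compute A on arbitrary vectors
  have hmain : ∀ x : Fin d → ℂ, A *ᵥ x = ((c0 / n / n) • V) *ᵥ x := by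
    intro x
    set u : Fin d → ℂ := x - ((star v ⬝ᵥ x) / n) • v with hudef
    have hvu : star v ⬝ᵥ u = 0 := by
      rw [hudef, dotProduct_sub, dotProduct_smul, smul_eq_mul, ← hndef,
        div_mul_cancel₀ _ hn, sub_self]
    have hAu : A *ᵥ u = 0 := hker u hvu
    have hx : x = ((star v ⬝ᵥ x) / n) • v + u := by rw [hudef]; abel
    have lhs : A *ᵥ x = ((star v ⬝ᵥ x) / n * (c0 / n)) • v := by
      conv_lhs => rw [hx]
      rw [mulVec_add, mulVec_smul, hAu, add_zero, hAv, smul_smul]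
    have rhs : ((c0 / n / n) • V) *ᵥ x = (c0 / n / n * (star v ⬝ᵥ x)) • v := by
      rw [smul_mulVec, hVmul, smul_smul]
    rw [lhs, rhs]
    congr 1
    ring
  have hAeq : A = (c0 / n / n) • V := by
    ext i j
    have := congrFun (hmain (Pi.single j 1)) i
    simpa using this
  -- show c0 / n / n is a nonneg real
  have hc0 : 0 ≤ c0 := hA.dotProduct_mulVec_nonneg v
  have hn0 : 0 ≤ n := dotProduct_star_self_nonneg v
  obtain ⟨hc0re, hc0im⟩ := Complex.nonneg_iff.mp hc0
  obtain ⟨hnre, hnim⟩ := Complex.nonneg_iff.mp hn0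
  have hc0eq : c0 = (c0.re : ℂ) := by
    rw [Complex.ext_iff]; simp [← hc0im]
  have hneq : n = (n.re : ℂ) := by
    rw [Complex.ext_iff]; simp [← hnim]
  refine ⟨c0.re / n.re / n.re, ?_, ?_⟩
  · positivity
  · rw [hAeq, rsmul_eq_csmul]
    congr 1
    rw [Complex.ofReal_div, Complex.ofReal_div, ← hc0eq, ← hneq]

/-- The noncontextual measurement-assignment polytope of a single measurement (POVM). -/
def povmPolytope {d : ℕ} {B : Type*} [Fintype B]
    (M : B → Matrix (Fin d) (Fin d) ℂ) : Set (B → ℝ) :=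
  {q | (∀ b, 0 ≤ q b) ∧ (∑ b : B, q b = 1) ∧
    ∀ β : B → ℝ, (∑ b : B, β b • M b = 0) → (∑ b : B, β b * q b = 0)}

/-- A single measurement (POVM) is classical. -/
def IsClassicalPOVM {d : ℕ} {B : Type*} [Fintype B]
    (M : B → Matrix (Fin d) (Fin d) ℂ) : Prop :=
  ∃ (n : ℕ) (G : Fin n → Matrix (Fin d) (Fin d) ℂ) (q : Fin n → B → ℝ),
    (∀ l, (G l).PosSemidef) ∧ (∑ l, G l = 1) ∧
    (∀ l, q l ∈ povmPolytope M) ∧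
    (∀ b : B, M b = ∑ l, q l b • G l)

theorem nonclassical_fraction_of_rank_one_povm_is_one
    {d : ℕ} (hd : 1 ≤ d) {B : Type*} [Fintype B]
    (M : B → Matrix (Fin d) (Fin d) ℂ)
    (hrankone : ∀ b, ∃ v : Fin d → ℂ, v ≠ 0 ∧
      M b = Matrix.of (fun i j => v i * star (v j)))
    (hnorm : ∑ b : B, M b = 1)
    (hnc : ¬ IsClassicalPOVM M)
    (ω : ℝ) (hω0 : 0 ≤ ω) (hω1 : ω < 1) :
    ¬ ∃ N K : B → Matrix (Fin d) (Fin d) ℂ,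
        (∀ b, (N b).PosSemidef) ∧ (∑ b : B, N b = 1) ∧
        (∀ b, (K b).PosSemidef) ∧ (∑ b : B, K b = 1) ∧
        (∀ b, M b = ω • N b + (1 - ω) • K b) ∧
        (∀ β : B → ℝ, (∑ b : B, β b • M b = 0) →
          (∑ b : B, β b • N b = 0) ∧ (∑ b : B, β b • K b = 0)) ∧
        IsClassicalPOVM K := by
  rintro ⟨N, K, hNpsd, hNsum, hKpsd, hKsum, hdecomp, hdep, hKcl⟩
  choose v hv hMv using hrankone
  have h1ω : (0:ℝ) < 1 - ω := by linarith
  -- each K b is a nonnegative multiple of M b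
  have hKmul : ∀ b, ∃ t : ℝ, 0 ≤ t ∧ K b = t • M b := by
    intro b
    have h1 : ((1 - ω) • K b).PosSemidef := psd_rsmul (hKpsd b) h1ω.le
    have h2 : (Matrix.of (fun i j => v b i * star (v b j)) - (1 - ω) • K b).PosSemidef := by
      have he : Matrix.of (fun i j => v b i * star (v b j)) - (1 - ω) • K b = ω • N b := by
        rw [← hMv b, hdecomp b]
        abel
      rw [he]
      exact psd_rsmul (hNpsd b) hω0
    obtain ⟨c, hc0, hc⟩ := psd_le_rank_one (hv b) h1 h2
    rw [← hMv b] at hc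
    refine ⟨c / (1 - ω), by positivity, ?_⟩
    calc K b = (1 - ω)⁻¹ • ((1 - ω) • K b) := by
          rw [smul_smul, inv_mul_cancel₀ h1ω.ne', one_smul]
      _ = (c / (1 - ω)) • M b := by
          rw [hc, smul_smul]
          congr 1
          ring
  choose t ht0 htK using hKmul
  -- the dependency β b = t b - 1
  have hβM : ∑ b : B, (t b - 1) • M b = 0 := by
    have e1 : ∑ b : B, (t b - 1) • M b = ∑ b : B, t b • M b - ∑ b : B, M b := by
      rw [← Finset.sum_sub_distrib]
      exact Finset.sum_congr rfl fun b _ => by rw [sub_smul, one_smul]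
    have e2 : ∑ b : B, t b • M b = ∑ b : B, K b :=
      Finset.sum_congr rfl fun b _ => (htK b).symm
    rw [e1, e2, hKsum, hnorm, sub_self]
  obtain ⟨-, hβK⟩ := hdep (fun b => t b - 1) hβM
  have hβK' : ∑ b : B, ((t b - 1) * t b) • M b = 0 := by
    rw [← hβK]
    exact Finset.sum_congr rfl fun b _ => by rw [htK b, smul_smul]
  have hsq : ∑ b : B, ((t b - 1) ^ 2) • M b = 0 := by
    have e : ∀ b : B, ((t b - 1) ^ 2) • M b = ((t b - 1) * t b) • M b - (t b - 1) • M b := by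
      intro b
      rw [← sub_smul]
      congr 1
      ring
    rw [Finset.sum_congr rfl fun b _ => e b, Finset.sum_sub_distrib, hβK', hβM, sub_zero]
  -- take traces
  set S : B → ℝ := fun b => ∑ i, Complex.normSq (v b i) with hS
  have htrM : ∀ b, Matrix.trace (M b) = ((S b : ℝ) : ℂ) := by
    intro b
    rw [hMv b]
    simp only [Matrix.trace, Matrix.diag, Matrix.of_apply, Complex.star_def, Complex.mul_conj, hS]
    push_cast
    rfl
  have htr := congrArg Matrix.trace hsq
  rw [Matrix.trace_sum, Matrix.trace_zero] at htr
  have h2 : ∑ b : B, (((t b - 1) ^ 2 * S b : ℝ) : ℂ) = 0 := by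
    rw [← htr]
    refine Finset.sum_congr rfl fun b _ => ?_
    rw [Matrix.trace_smul, htrM b, Complex.real_smul]
    push_cast
    ring
  have hre : ∑ b : B, (t b - 1) ^ 2 * S b = 0 := by exact_mod_cast h2
  have hSpos : ∀ b, 0 < S b := by
    intro b
    obtain ⟨i, hi⟩ := Function.ne_iff.mp (hv b)
    exact Finset.sum_pos' (fun i _ => Complex.normSq_nonneg _)
      ⟨i, Finset.mem_univ i, Complex.normSq_pos.mpr hi⟩
  have ht1 : ∀ b, t b = 1 := by
    intro b
    have hterm := (Finset.sum_eq_zero_iff_of_nonneg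
      (fun b _ => mul_nonneg (sq_nonneg _) (hSpos b).le)).mp hre b (Finset.mem_univ b)
    have : (t b - 1) ^ 2 = 0 := by
      rcases mul_eq_zero.mp hterm with h | h
      · exact h
      · exact absurd h (hSpos b).ne'
    have := pow_eq_zero_iff (n := 2) (by norm_num) |>.mp this
    linarith [sub_eq_zero.mp this]
  have hKM : K = M := by
    funext b
    rw [htK b, ht1 b, one_smul]
  rw [hKM] at hKcl
  exact hnc hKcl
end
end

section
/- Define the BB84 qubit measurement M : {1,2,3,4} → Matrix (Fin 2) (Fin 2) ℂ by M_b := (1/4)( 1 + cos(πb/2) • σx + sin(πb/2) • σz ), and the four qubit states σ_b := (1/2)( 1 − cos(πb/2) • σx − sin(πb/2) • σz ) (the state with Bloch vector antipodal to the effect M_b). Let K : {1,2,3,4} → Matrix (Fin 2) (Fin 2) ℂ be any POVM (each K_b positive semidefinite, ∑_b K_b = 1) such that for every β : {1,2,3,4} → ℝ with ∑_b β(b) • M_b = 0 one has ∑_b β(b) • K_b = 0 (K satisfies the operational identities of the BB84 measurement), and suppose K is classical. Then ∑_{b=1}^{4} Tr(σ_b K_b) ≥ 1 − √2/2, where each trace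 is a nonnegative real number. (This is the linear nonclassicality witness for the BB84 measurement obtained from the weight-based dual semidefinite program.) -/
open Matrix BigOperators Real
open scoped ComplexOrder

noncomputable section

def σx : Matrix (Fin 2) (Fin 2) ℂ := !![0, 1; 1, 0]
def σz : Matrix (Fin 2) (Fin 2) ℂ := !![1, 0; 0, -1]

/-- The BB84 qubit measurement: `M_b = (1/4)(1 + cos(πb/2) σx + sin(πb/2) σz)` for
`b = 1, 2, 3, 4`. -/
def bb84Meas : Fin 4 → Matrix (Fin 2) (Fin 2) ℂ :=
  fun b => (4 : ℝ)⁻¹ •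
    ((1 : Matrix (Fin 2) (Fin 2) ℂ) +
      Real.cos (π * ((b : ℕ) + 1) / 2) • σx + Real.sin (π * ((b : ℕ) + 1) / 2) • σz)

/-- The qubit states with Bloch vectors antipodal to the BB84 effects:
`σ_b = (1/2)(1 − cos(πb/2) σx − sin(πb/2) σz)` for `b = 1, 2, 3, 4`. -/
def bb84Witness : Fin 4 → Matrix (Fin 2) (Fin 2) ℂ :=
  fun b => (2 : ℝ)⁻¹ •
    ((1 : Matrix (Fin 2) (Fin 2) ℂ) -
      Real.cos (π * ((b : ℕ) + 1) / 2) • σx - Real.sin (π * ((b : ℕ) + 1) / 2) • σz)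


section BB84Aux

lemma bb84_val2 : ((2:Fin 4):ℕ) = 2 := rfl
lemma bb84_val3 : ((3:Fin 4):ℕ) = 3 := rfl

lemma bb84_trig0c : Real.cos (π * (((0:Fin 4):ℕ) + 1) / 2) = 0 := by
  norm_num [show π * (0 + 1) / 2 = π/2 by ring]
lemma bb84_trig0s : Real.sin (π * (((0:Fin 4):ℕ) + 1) / 2) = 1 := by
  norm_num [show π * (0 + 1) / 2 = π/2 by ring]
lemma bb84_trig1c : Real.cos (π * (((1:Fin 4):ℕ) + 1) / 2) = -1 := by
  norm_num [show π * ((1:ℕ) + 1) / 2 = π by push_cast; ring]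
lemma bb84_trig1s : Real.sin (π * (((1:Fin 4):ℕ) + 1) / 2) = 0 := by
  norm_num [show π * ((1:ℕ) + 1) / 2 = π by push_cast; ring]
lemma bb84_trig2c : Real.cos (π * (((2:Fin 4):ℕ) + 1) / 2) = 0 := by
  have h : π * (((2:Fin 4):ℕ) + 1) / 2 = π + π/2 := by rw [bb84_val2]; push_cast; ring
  rw [h, Real.cos_add]; simp
lemma bb84_trig2s : Real.sin (π * (((2:Fin 4):ℕ) + 1) / 2) = -1 := by
  have h : π * (((2:Fin 4):ℕ) + 1) / 2 = π + π/2 := by rw [bb84_val2]; push_cast; ring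
  rw [h, Real.sin_add]; simp
lemma bb84_trig3c : Real.cos (π * (((3:Fin 4):ℕ) + 1) / 2) = 1 := by
  have h : π * (((3:Fin 4):ℕ) + 1) / 2 = 2*π := by rw [bb84_val3]; push_cast; ring
  rw [h, Real.cos_two_pi]
lemma bb84_trig3s : Real.sin (π * (((3:Fin 4):ℕ) + 1) / 2) = 0 := by
  have h : π * (((3:Fin 4):ℕ) + 1) / 2 = 2*π := by rw [bb84_val3]; push_cast; ring
  rw [h, Real.sin_two_pi]

lemma bb84_wit0 : bb84Witness 0 = !![0,0;0,1] := by
  unfold bb84Witness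
  rw [bb84_trig0c, bb84_trig0s]
  ext i j
  fin_cases i <;> fin_cases j <;>
    simp [σx, σz, Matrix.one_apply] <;> norm_num
lemma bb84_wit1 : bb84Witness 1 = !![1/2,1/2;1/2,1/2] := by
  unfold bb84Witness
  rw [bb84_trig1c, bb84_trig1s]
  ext i j
  fin_cases i <;> fin_cases j <;>
    simp [σx, σz, Matrix.one_apply] <;> norm_num
lemma bb84_wit2 : bb84Witness 2 = !![1,0;0,0] := by
  unfold bb84Witness
  rw [bb84_trig2c, bb84_trig2s]
  ext i j
  fin_cases i <;> fin_cases j <;>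
    simp [σx, σz, Matrix.one_apply] <;> norm_num
lemma bb84_wit3 : bb84Witness 3 = !![1/2,-(1/2);-(1/2),1/2] := by
  unfold bb84Witness
  rw [bb84_trig3c, bb84_trig3s]
  ext i j
  fin_cases i <;> fin_cases j <;>
    simp [σx, σz, Matrix.one_apply] <;> norm_num

lemma bb84_meas_relation :
    ∑ b : Fin 4, (![1,-1,1,-1] : Fin 4 → ℝ) b • bb84Meas b = 0 := by
  rw [Fin.sum_univ_four]
  unfold bb84Meas
  rw [bb84_trig0c, bb84_trig0s, bb84_trig1c, bb84_trig1s, bb84_trig2c, bb84_trig2s,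
    bb84_trig3c, bb84_trig3s]
  ext i j
  fin_cases i <;> fin_cases j <;>
    simp [σx, σz, Matrix.one_apply] <;> norm_num

lemma bb84_tr0 (g : Matrix (Fin 2) (Fin 2) ℂ) :
    (bb84Witness 0 * g).trace = g 1 1 := by
  rw [bb84_wit0]
  simp [Matrix.trace_fin_two, Matrix.mul_apply, Matrix.vecMul, dotProduct,
    Fin.sum_univ_two]
lemma bb84_tr1 (g : Matrix (Fin 2) (Fin 2) ℂ) :
    (bb84Witness 1 * g).trace = (1/2)*(g 0 0 + g 1 0 + g 0 1 + g 1 1) := by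
  rw [bb84_wit1]
  simp [Matrix.trace_fin_two, Matrix.mul_apply, Matrix.vecMul, dotProduct,
    Fin.sum_univ_two]
  ring
lemma bb84_tr2 (g : Matrix (Fin 2) (Fin 2) ℂ) :
    (bb84Witness 2 * g).trace = g 0 0 := by
  rw [bb84_wit2]
  simp [Matrix.trace_fin_two, Matrix.mul_apply, Matrix.vecMul, dotProduct,
    Fin.sum_univ_two]
lemma bb84_tr3 (g : Matrix (Fin 2) (Fin 2) ℂ) :
    (bb84Witness 3 * g).trace = (1/2)*(g 0 0 - g 1 0 - g 0 1 + g 1 1) := by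
  rw [bb84_wit3]
  simp [Matrix.trace_fin_two, Matrix.mul_apply, Matrix.vecMul, dotProduct,
    Fin.sum_univ_two]
  ring

lemma bb84_quadAux (x y r AA BB u : ℝ) (hx : 0 ≤ x) (hB : 0 < BB) (hu : u^2 ≤ 4*AA*BB)
    (hform : ∀ t : ℝ, 0 ≤ t^2*x + 2*t*r + y) : 0 ≤ AA*x + u*r + BB*y := by
  have h6 := hform (u/(2*BB))
  have hBne : BB ≠ 0 := hB.ne'
  have e1 : BB*((u/(2*BB))^2*x + 2*(u/(2*BB))*r + y) = u^2/(4*BB)*x + u*r + BB*y := by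
    field_simp; ring
  have h7 : 0 ≤ u^2/(4*BB)*x + u*r + BB*y := e1 ▸ mul_nonneg hB.le h6
  have h8 : u^2/(4*BB) ≤ AA := by
    rw [div_le_iff₀ (by positivity)]; nlinarith
  nlinarith [mul_nonneg (sub_nonneg.mpr h8) hx]

/-- Per-component bound: for `q` in the polytope slice and `g` PSD. -/
lemma bb84_key (p : Fin 4 → ℝ) (g : Matrix (Fin 2) (Fin 2) ℂ) (hg : g.PosSemidef)
    (hp : ∀ b, 0 ≤ p b) (h02 : p 0 + p 2 = 1/2) (h13 : p 1 + p 3 = 1/2) :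
    (1/2 - Real.sqrt 2/4) * g.trace.re ≤
      ∑ b : Fin 4, p b * ((bb84Witness b * g).trace.re) := by
  have h10 : g 1 0 = starRingEnd ℂ (g 0 1) := by
    have h := congrFun (congrFun hg.1 0) 1
    rw [Matrix.conjTranspose_apply] at h
    exact (star_eq_iff_star_eq.mp h).symm
  rw [Fin.sum_univ_four, bb84_tr0, bb84_tr1, bb84_tr2, bb84_tr3, Matrix.trace_fin_two]
  have e1 : ((1/2:ℂ)*(g 0 0 + g 1 0 + g 0 1 + g 1 1)).re
      = (g 0 0).re/2 + (g 1 1).re/2 + (g 0 1).re := by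
    simp [h10, Complex.add_re, Complex.mul_re, Complex.conj_re, Complex.conj_im]; ring
  have e3 : ((1/2:ℂ)*(g 0 0 - g 1 0 - g 0 1 + g 1 1)).re
      = (g 0 0).re/2 + (g 1 1).re/2 - (g 0 1).re := by
    simp [h10, Complex.add_re, Complex.sub_re, Complex.mul_re,
      Complex.conj_re, Complex.conj_im]; ring
  rw [e1, e3, Complex.add_re]
  obtain ⟨x, y, r, hxdef, hydef, hrdef⟩ :
      ∃ x y r : ℝ, (g 0 0).re = x ∧ (g 1 1).re = y ∧ (g 0 1).re = r :=
    ⟨_, _, _, rfl, rfl, rfl⟩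
  rw [hxdef, hydef, hrdef]
  have hx : 0 ≤ x := by
    have h := hg.dotProduct_mulVec_nonneg ![1, 0]
    simp [Matrix.mulVec, dotProduct, Fin.sum_univ_two] at h
    rw [Complex.le_def] at h
    rw [← hxdef]; simpa using h.1
  have hform : ∀ t : ℝ, 0 ≤ t^2 * x + 2*t*r + y := by
    intro t
    have h := hg.dotProduct_mulVec_nonneg ![(t:ℂ), 1]
    simp [Matrix.mulVec, dotProduct, Fin.sum_univ_two] at h
    rw [Complex.le_def] at h
    have h1 := h.1
    simp [h10, Complex.add_re, Complex.mul_re, Complex.conj_re, Complex.conj_im,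
      hxdef, hydef, hrdef] at h1
    nlinarith [h1]
  have hs2 : (Real.sqrt 2)^2 = 2 := Real.sq_sqrt (by norm_num)
  have hs0 : 0 ≤ Real.sqrt 2 := Real.sqrt_nonneg 2
  have hs1 : 1 < Real.sqrt 2 := by nlinarith
  have hBpos : 0 < p 0 + Real.sqrt 2/4 - 1/4 := by have := hp 0; linarith
  have hu2 : (p 1 - p 3)^2 ≤ 4*(p 2 + Real.sqrt 2/4 - 1/4)*(p 0 + Real.sqrt 2/4 - 1/4) := by
    have h0 := hp 0; have h1 := hp 1; have h2 := hp 2; have h3 := hp 3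
    nlinarith [mul_nonneg h0 h2, mul_nonneg h1 h3]
  have h4 := bb84_quadAux x y r (p 2 + Real.sqrt 2/4 - 1/4) (p 0 + Real.sqrt 2/4 - 1/4)
    (p 1 - p 3) hx hBpos hu2 hform
  have hp3 : p 3 = 1/2 - p 1 := by linarith
  have hp2 : p 2 = 1/2 - p 0 := by linarith
  rw [hp2, hp3] at h4 ⊢
  linarith [h4]

end BB84Aux

theorem bb84_nonclassicality_witness
    (K : Fin 4 → Matrix (Fin 2) (Fin 2) ℂ)
    (hKpsd : ∀ b, (K b).PosSemidef)
    (hKnorm : ∑ b : Fin 4, K b = 1)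
    (hopid : ∀ β : Fin 4 → ℝ, (∑ b : Fin 4, β b • bb84Meas b = 0) →
      ∑ b : Fin 4, β b • K b = 0)
    (hclassical : IsClassicalPOVM K) :
    1 - Real.sqrt 2 / 2 ≤ ∑ b : Fin 4, ((bb84Witness b * K b).trace.re) := by
  obtain ⟨n, G, Q, hGpsd, hGsum, hQmem, hKdecomp⟩ := hclassical
  have hrelK : ∑ b : Fin 4, (![1,-1,1,-1] : Fin 4 → ℝ) b • K b = 0 :=
    hopid _ bb84_meas_relation
  -- facts about each Q l
  have hQ02 : ∀ l, Q l 0 + Q l 2 = 1/2 := by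
    intro l
    have h1 := (hQmem l).2.1
    have h2 := (hQmem l).2.2 ![1,-1,1,-1] hrelK
    rw [Fin.sum_univ_four] at h1 h2
    simp at h2
    linarith
  have hQ13 : ∀ l, Q l 1 + Q l 3 = 1/2 := by
    intro l
    have h1 := (hQmem l).2.1
    have h2 := (hQmem l).2.2 ![1,-1,1,-1] hrelK
    rw [Fin.sum_univ_four] at h1 h2
    simp at h2
    linarith
  -- rewrite the objective
  have step : ∀ b : Fin 4, ((bb84Witness b * K b).trace.re)
      = ∑ l, Q l b * ((bb84Witness b * G l).trace.re) := by
    intro b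
    rw [hKdecomp b, Matrix.mul_sum, Matrix.trace_sum, Complex.re_sum]
    refine Finset.sum_congr rfl fun l _ => ?_
    rw [Matrix.mul_smul, Matrix.trace_smul]
    simp [Complex.real_smul, Complex.mul_re]
  calc 1 - Real.sqrt 2 / 2
      = ∑ l : Fin n, (1/2 - Real.sqrt 2/4) * (G l).trace.re := by
        have : ∑ l : Fin n, (G l).trace.re = 2 := by
          have h := congrArg (fun A : Matrix (Fin 2) (Fin 2) ℂ => A.trace.re) hGsum
          rw [Matrix.trace_sum, Complex.re_sum] at h
          rw [h]
          simp [Matrix.trace_one]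
        rw [← Finset.mul_sum, this]
        ring
    _ ≤ ∑ l : Fin n, ∑ b : Fin 4, Q l b * ((bb84Witness b * G l).trace.re) := by
        refine Finset.sum_le_sum fun l _ => ?_
        exact bb84_key (Q l) (G l) (hGpsd l) (hQmem l).1 (hQ02 l) (hQ13 l)
    _ = ∑ b : Fin 4, ((bb84Witness b * K b).trace.re) := by
        rw [Finset.sum_comm]
        exact Finset.sum_congr rfl fun b _ => (step b).symm
end
end
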